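/- Let g be a Lie superalgebra over a commutative ring k with a 2-operation (·)^⟨2⟩, and suppose g₁ is k-free. For any commutative k-algebra R, the formula (Σᵢ xᵢ⊗cᵢ)^⟨2⟩_R := Σᵢ xᵢ^⟨2⟩⊗cᵢ² + Σ_{i<j} [xᵢ,xⱼ]⊗cᵢcⱼ (for a totally ordered basis x₁<⋯<xₙ of g₁ and cᵢ ∈ R) is independent of the choice of ordered basis and defines a 2-operation on the R-Lie superalgebra g⊗R. Moreover, for arbitrary vᵢ ∈ g₁, cᵢ ∈ R, one has (Σᵢ vᵢ⊗cᵢ)^⟨2⟩_R = Σᵢ vᵢ^⟨2⟩⊗cᵢ² + Σ_{i<j}[vᵢ,vⱼ]⊗cᵢcⱼ. -/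

import Mathlib

open TensorProduct
open TensorProduct

section StmtAux

variable {ι N : Type*} [LinearOrder ι] [AddCommMonoid N]

lemma stmt11_sum_split (s : Finset ι) (F : ι → ι → N) :
    ∑ i ∈ s, ∑ j ∈ s, F i j
      = (∑ i ∈ s, F i i) + (∑ i ∈ s, ∑ j ∈ s.filter (fun j => i < j), F i j)
        + ∑ i ∈ s, ∑ j ∈ s.filter (fun j => i < j), F j i := by
  classical
  have h1 : ∀ i ∈ s, ∑ j ∈ s, F i j
      = (∑ j ∈ s.filter (fun j => i < j), F i j) + F i i
        + ∑ j ∈ s.filter (fun j => j < i), F i j := by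
    intro i hi
    rw [← Finset.sum_filter_add_sum_filter_not s (fun j => i < j) (F i)]
    have he : s.filter (fun j => ¬ i < j) = insert i (s.filter (fun j => j < i)) := by
      ext a
      simp only [Finset.mem_filter, not_lt, Finset.mem_insert]
      constructor
      · rintro ⟨ha, hle⟩
        rcases lt_or_eq_of_le hle with h | h
        · exact Or.inr ⟨ha, h⟩
        · exact Or.inl h
      · rintro (rfl | ⟨ha, hlt⟩)
        · exact ⟨hi, le_refl _⟩
        · exact ⟨ha, le_of_lt hlt⟩
    rw [he, Finset.sum_insert (by simp)]
    abel
  rw [Finset.sum_congr rfl h1]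
  rw [Finset.sum_add_distrib, Finset.sum_add_distrib]
  have h2 : ∑ i ∈ s, ∑ j ∈ s.filter (fun j => j < i), F i j
      = ∑ i ∈ s, ∑ j ∈ s.filter (fun j => i < j), F j i := by
    rw [Finset.sum_comm' (t := fun i => s.filter (fun j => j < i))
      (t' := s) (s' := fun j => s.filter (fun i => j < i))]
    intro x y
    simp only [Finset.mem_filter]
    tauto
  rw [h2]
  abel

lemma stmt11_pairing (s : Finset ι) (F : ι → ι → N) (D : ι → N) (O : ι → ι → N)
    (hD : ∀ i ∈ s, F i i = D i)
    (hO : ∀ i ∈ s, ∀ j ∈ s, i < j → F i j + F j i = O i j) :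
    ∑ i ∈ s, ∑ j ∈ s, F i j
      = (∑ i ∈ s, D i) + ∑ i ∈ s, ∑ j ∈ s.filter (fun j => i < j), O i j := by
  classical
  rw [stmt11_sum_split]
  rw [Finset.sum_congr rfl hD, add_assoc, ← Finset.sum_add_distrib]
  congr 1
  refine Finset.sum_congr rfl fun i hi => ?_
  rw [← Finset.sum_add_distrib]
  refine Finset.sum_congr rfl fun j hj => ?_
  simp only [Finset.mem_filter] at hj
  exact hO i hi j hj.1 hj.2

lemma stmt11_expand {M N' : Type*} [AddCommMonoid M] [AddCommGroup N']
    (Q : M → N') (B : M → M → N')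
    (hB0 : ∀ x, B x 0 = 0) (hBadd : ∀ x y z, B x (y + z) = B x y + B x z)
    (hBsym : ∀ x y, B x y = B y x)
    (hQ : ∀ x y, Q (x + y) = Q x + B x y + Q y)
    (s : Finset ι) (f : ι → M) :
    Q (∑ i ∈ s, f i)
      = (∑ i ∈ s, Q (f i)) + ∑ i ∈ s, ∑ j ∈ s.filter (fun j => i < j), B (f i) (f j) := by
  classical
  have hQ0 : Q 0 = 0 := by
    have h := hQ 0 0
    rw [add_zero, hB0, add_zero] at h
    exact (left_eq_add.mp h)
  induction s using Finset.induction_on with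
  | empty => simpa using hQ0
  | @insert a s ha ih =>
    rw [Finset.sum_insert ha, hQ, ih, Finset.sum_insert ha]
    have hBsum : ∀ (x : M) (t : Finset ι) (g : ι → M),
        B x (∑ i ∈ t, g i) = ∑ i ∈ t, B x (g i) := by
      intro x t g
      induction t using Finset.induction_on with
      | empty => simpa using hB0 x
      | @insert b t hb iht => rw [Finset.sum_insert hb, hBadd, iht, Finset.sum_insert hb]
    rw [hBsum]
    -- pair sums over insert a s
    rw [Finset.sum_insert ha]
    have hfa : (insert a s).filter (fun j => a < j) = s.filter (fun j => a < j) := by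
      rw [Finset.filter_insert, if_neg (lt_irrefl a)]
    have hfi : ∀ i ∈ s, (insert a s).filter (fun j => i < j)
        = if i < a then insert a (s.filter (fun j => i < j)) else s.filter (fun j => i < j) := by
      intro i hi
      rw [Finset.filter_insert]
    have hinner : ∑ i ∈ s, ∑ j ∈ (insert a s).filter (fun j => i < j), B (f i) (f j)
        = (∑ i ∈ s, ∑ j ∈ s.filter (fun j => i < j), B (f i) (f j))
          + ∑ i ∈ s.filter (fun i => i < a), B (f i) (f a) := by
      rw [← Finset.sum_filter_add_sum_filter_not s (fun i => i < a)
        (fun i => ∑ j ∈ (insert a s).filter (fun j => i < j), B (f i) (f j)),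
        ← Finset.sum_filter_add_sum_filter_not s (fun i => i < a)
        (fun i => ∑ j ∈ s.filter (fun j => i < j), B (f i) (f j))]
      have e1 : ∀ i ∈ s.filter (fun i => i < a),
          ∑ j ∈ (insert a s).filter (fun j => i < j), B (f i) (f j)
            = (∑ j ∈ s.filter (fun j => i < j), B (f i) (f j)) + B (f i) (f a) := by
        intro i hi
        simp only [Finset.mem_filter] at hi
        rw [hfi i hi.1, if_pos hi.2, Finset.sum_insert (by simp [ha]), add_comm]
      have e2 : ∀ i ∈ s.filter (fun i => ¬ i < a),
          ∑ j ∈ (insert a s).filter (fun j => i < j), B (f i) (f j)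
            = ∑ j ∈ s.filter (fun j => i < j), B (f i) (f j) := by
        intro i hi
        simp only [Finset.mem_filter] at hi
        rw [hfi i hi.1, if_neg hi.2]
      rw [Finset.sum_congr rfl e1, Finset.sum_congr rfl e2, Finset.sum_add_distrib]
      abel
    rw [hinner, hfa]
    have hsplit : (∑ j ∈ s.filter (fun j => a < j), B (f a) (f j))
        + ∑ i ∈ s.filter (fun i => i < a), B (f i) (f a)
        = ∑ i ∈ s, B (f a) (f i) := by
      rw [← Finset.sum_filter_add_sum_filter_not s (fun j => a < j) (fun i => B (f a) (f i))]
      congr 1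
      have : s.filter (fun j => ¬ a < j) = s.filter (fun i => i < a) := by
        ext x
        simp only [Finset.mem_filter, not_lt]
        constructor
        · rintro ⟨hx, hle⟩
          refine ⟨hx, lt_of_le_of_ne hle ?_⟩
          rintro rfl; exact ha hx
        · rintro ⟨hx, hlt⟩; exact ⟨hx, le_of_lt hlt⟩
      rw [this]
      exact Finset.sum_congr rfl fun i _ => hBsym _ _
    rw [← hsplit]
    abel

end StmtAux
section Main

variable {k g0 g1 R ι : Type*} [CommRing k] [AddCommGroup g0] [Module k g0]
  [AddCommGroup g1] [Module k g1] [CommRing R] [Algebra k R] [LinearOrder ι]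

/-- coordinate formula for the base-changed 2-operation -/
noncomputable def stmt11QF (q : g1 → g0) (b11 : g1 →ₗ[k] g1 →ₗ[k] g0) (bb : Module.Basis ι k g1)
    (s : Finset ι) (c : ι → R) : R ⊗[k] g0 :=
  (∑ i ∈ s, (c i * c i) ⊗ₜ q (bb i)) +
  ∑ i ∈ s, ∑ j ∈ s.filter (fun j => i < j), (c i * c j) ⊗ₜ b11 (bb i) (bb j)

variable (q : g1 → g0) (b11 : g1 →ₗ[k] g1 →ₗ[k] g0) (bb : Module.Basis ι k g1)

lemma stmt11QF_congr {s : Finset ι} {c c' : ι → R} (h : ∀ i ∈ s, c i = c' i) :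
    stmt11QF q b11 bb s c = stmt11QF q b11 bb s c' := by
  unfold stmt11QF
  congr 1
  · exact Finset.sum_congr rfl fun i hi => by rw [h i hi]
  · refine Finset.sum_congr rfl fun i hi => Finset.sum_congr rfl fun j hj => ?_
    simp only [Finset.mem_filter] at hj
    rw [h i hi, h j hj.1]

lemma stmt11QF_ext {s t : Finset ι} {c : ι → R} (hst : s ⊆ t)
    (h : ∀ i ∈ t, i ∉ s → c i = 0) :
    stmt11QF q b11 bb s c = stmt11QF q b11 bb t c := by
  unfold stmt11QF
  congr 1
  · refine Finset.sum_subset hst fun i hi his => ?_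
    rw [h i hi his, zero_mul, zero_tmul]
  · rw [Finset.sum_subset hst (fun i hi his => ?_)]
    · refine Finset.sum_congr rfl fun i hi => ?_
      refine Finset.sum_subset (Finset.filter_subset_filter _ hst) fun j hj hjs => ?_
      simp only [Finset.mem_filter] at hj hjs
      rw [h j hj.1 (fun hjm => hjs ⟨hjm, hj.2⟩), mul_zero, zero_tmul]
    · refine Finset.sum_eq_zero fun j _ => ?_
      rw [h i hi his, zero_mul, zero_tmul]

lemma stmt11QF_smul (r : R) (s : Finset ι) (c : ι → R) :
    stmt11QF q b11 bb s (fun i => r * c i) = (r * r) • stmt11QF q b11 bb s c := by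
  unfold stmt11QF
  rw [smul_add, Finset.smul_sum, Finset.smul_sum]
  congr 1
  · refine Finset.sum_congr rfl fun i hi => ?_
    rw [TensorProduct.smul_tmul', smul_eq_mul]; ring_nf
  · refine Finset.sum_congr rfl fun i hi => ?_
    rw [Finset.smul_sum]
    refine Finset.sum_congr rfl fun j hj => ?_
    rw [TensorProduct.smul_tmul', smul_eq_mul]; ring_nf

lemma stmt11QF_add (hdiag : ∀ v : g1, b11 v v = q v + q v)
    (hsym : ∀ v w : g1, b11 v w = b11 w v) (s : Finset ι) (c d : ι → R) :
    stmt11QF q b11 bb s (fun i => c i + d i)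
      = stmt11QF q b11 bb s c
        + (∑ i ∈ s, ∑ j ∈ s, (c i * d j) ⊗ₜ b11 (bb i) (bb j))
        + stmt11QF q b11 bb s d := by
  rw [stmt11_pairing s _ (fun i => (c i * d i) ⊗ₜ[k] q (bb i) + (c i * d i) ⊗ₜ[k] q (bb i))
      (fun i j => (c i * d j) ⊗ₜ[k] b11 (bb i) (bb j) + (c j * d i) ⊗ₜ[k] b11 (bb i) (bb j))
      (fun i _ => by rw [hdiag, tmul_add])
      (fun i _ j _ _ => by rw [hsym (bb j) (bb i)])]
  unfold stmt11QF
  have e1 : ∀ i ∈ s, ((c i + d i) * (c i + d i)) ⊗ₜ[k] q (bb i)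
      = (c i * c i) ⊗ₜ[k] q (bb i) + (d i * d i) ⊗ₜ[k] q (bb i)
        + ((c i * d i) ⊗ₜ[k] q (bb i) + (c i * d i) ⊗ₜ[k] q (bb i)) := by
    intro i _
    rw [show (c i + d i) * (c i + d i)
        = c i * c i + d i * d i + (c i * d i + c i * d i) by ring,
      add_tmul, add_tmul, add_tmul]
  have e2 : ∀ i ∈ s, ∀ j ∈ s.filter (fun j => i < j),
      ((c i + d i) * (c j + d j)) ⊗ₜ[k] b11 (bb i) (bb j)
      = (c i * c j) ⊗ₜ[k] b11 (bb i) (bb j) + (d i * d j) ⊗ₜ[k] b11 (bb i) (bb j)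
        + ((c i * d j) ⊗ₜ[k] b11 (bb i) (bb j) + (c j * d i) ⊗ₜ[k] b11 (bb i) (bb j)) := by
    intro i _ j _
    rw [show (c i + d i) * (c j + d j)
        = c i * c j + d i * d j + (c i * d j + c j * d i) by ring,
      add_tmul, add_tmul, add_tmul]
  rw [Finset.sum_congr rfl e1,
    Finset.sum_congr rfl (fun i hi => Finset.sum_congr rfl fun j hj => e2 i hi j hj)]
  simp only [Finset.sum_add_distrib]
  abel

end Main

lemma stmt11_repr_sum {ι S M : Type*} [CommRing S] [AddCommGroup M] [Module S M]
    [DecidableEq ι]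
    (b : Module.Basis ι S M) (x : M) {s : Finset ι} (hs : (b.repr x).support ⊆ s) :
    x = ∑ i ∈ s, b.repr x i • b i := by
  apply b.repr.injective
  ext j
  rw [map_sum, Finsupp.finset_sum_apply]
  have h1 : ∀ i ∈ s, (b.repr ((b.repr x) i • b i)) j
      = if i = j then b.repr x i else 0 := by
    intro i _
    rw [map_smul, b.repr_self]
    simp [Finsupp.single_apply]
  rw [Finset.sum_congr rfl h1, Finset.sum_ite_eq' s j]
  by_cases hj : j ∈ s
  · rw [if_pos hj]
  · rw [if_neg hj]
    exact Finsupp.notMem_support_iff.mp (fun hc => hj (hs hc))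

lemma stmt11_repr_sum_tmul {ι k g1 R : Type*} [CommRing k] [AddCommGroup g1] [Module k g1]
    [CommRing R] [Algebra k R] [DecidableEq ι]
    (bb : Module.Basis ι k g1) (x : R ⊗[k] g1) {s : Finset ι}
    (hs : ((Algebra.TensorProduct.basis R bb).repr x).support ⊆ s) :
    x = ∑ i ∈ s, ((Algebra.TensorProduct.basis R bb).repr x i) ⊗ₜ bb i := by
  have h := stmt11_repr_sum (Algebra.TensorProduct.basis R bb) x hs
  conv_lhs => rw [h]
  refine Finset.sum_congr rfl fun i _ => ?_
  rw [Algebra.TensorProduct.basis_apply, TensorProduct.smul_tmul', smul_eq_mul, mul_one]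
section QR

variable {k g0 g1 R ι : Type*} [CommRing k] [AddCommGroup g0] [Module k g0]
  [AddCommGroup g1] [Module k g1] [CommRing R] [Algebra k R] [LinearOrder ι]
variable (q : g1 → g0) (b11 : g1 →ₗ[k] g1 →ₗ[k] g0) (bb : Module.Basis ι k g1)

noncomputable def stmt11qR (x : R ⊗[k] g1) : R ⊗[k] g0 :=
  stmt11QF q b11 bb ((Algebra.TensorProduct.basis R bb).repr x).support
    (⇑((Algebra.TensorProduct.basis R bb).repr x))

lemma stmt11qR_eq (x : R ⊗[k] g1) {s : Finset ι}
    (hs : ((Algebra.TensorProduct.basis R bb).repr x).support ⊆ s) :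
    stmt11qR q b11 bb x
      = stmt11QF q b11 bb s (⇑((Algebra.TensorProduct.basis R bb).repr x)) :=
  stmt11QF_ext q b11 bb hs (fun _ _ hi => Finsupp.notMem_support_iff.mp hi)

lemma stmt11qR_sum (s : Finset ι) (c : ι → R) :
    stmt11qR q b11 bb (∑ i ∈ s, c i ⊗ₜ bb i) = stmt11QF q b11 bb s c := by
  classical
  have hx : ∀ j, (Algebra.TensorProduct.basis R bb).repr (∑ i ∈ s, c i ⊗ₜ[k] bb i) j
      = if j ∈ s then c j else 0 := by
    intro j
    rw [map_sum, Finsupp.finset_sum_apply]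
    have h1 : ∀ i ∈ s, ((Algebra.TensorProduct.basis R bb).repr (c i ⊗ₜ[k] bb i)) j
        = if i = j then c i else 0 := by
      intro i _
      have h2 : c i ⊗ₜ[k] bb i = c i • (Algebra.TensorProduct.basis R bb) i := by
        rw [Algebra.TensorProduct.basis_apply, TensorProduct.smul_tmul', smul_eq_mul, mul_one]
      rw [h2, map_smul, Module.Basis.repr_self]
      simp only [Finsupp.smul_apply, Finsupp.single_apply, smul_eq_mul]
      split <;> simp
    rw [Finset.sum_congr rfl h1, Finset.sum_ite_eq' s j]
  have hsupp : ((Algebra.TensorProduct.basis R bb).repr (∑ i ∈ s, c i ⊗ₜ[k] bb i)).support ⊆ s := by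
    intro j hj
    by_contra hjs
    exact (Finsupp.mem_support_iff.mp hj) (by rw [hx j, if_neg hjs])
  rw [stmt11qR_eq q b11 bb _ hsupp]
  exact stmt11QF_congr q b11 bb (fun i hi => by rw [hx i, if_pos hi])

lemma stmt11qR_zero : stmt11qR q b11 bb (0 : R ⊗[k] g1) = 0 := by
  rw [stmt11qR]
  rw [map_zero]
  simp [stmt11QF]

lemma stmt11qR_smul (r : R) (x : R ⊗[k] g1) :
    stmt11qR q b11 bb (r • x) = (r * r) • stmt11qR q b11 bb x := by
  have h1 : ((Algebra.TensorProduct.basis R bb).repr (r • x)).support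
      ⊆ ((Algebra.TensorProduct.basis R bb).repr x).support := by
    rw [map_smul]; exact Finsupp.support_smul
  rw [stmt11qR_eq q b11 bb _ h1]
  have h2 : ⇑((Algebra.TensorProduct.basis R bb).repr (r • x))
      = fun i => r * ((Algebra.TensorProduct.basis R bb).repr x) i := by
    funext i
    rw [map_smul, Finsupp.smul_apply, smul_eq_mul]
  rw [h2, stmt11QF_smul]
  rfl

lemma stmt11qR_tmul
    (hq1 : ∀ (c : k) (v : g1), q (c • v) = (c * c) • q v)
    (hq2 : ∀ v w : g1, q (v + w) = q v + b11 v w + q w)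
    (hsym : ∀ v w : g1, b11 v w = b11 w v)
    (c : R) (v : g1) :
    stmt11qR q b11 bb (c ⊗ₜ v) = (c * c) ⊗ₜ q v := by
  classical
  have hv : v = ∑ m ∈ (bb.repr v).support, bb.repr v m • bb m :=
    stmt11_repr_sum bb v subset_rfl
  have hdecomp : c ⊗ₜ[k] v
      = ∑ m ∈ (bb.repr v).support, (c * algebraMap k R (bb.repr v m)) ⊗ₜ bb m := by
    conv_lhs => rw [hv]
    rw [tmul_sum]
    refine Finset.sum_congr rfl fun m _ => ?_
    rw [tmul_smul, TensorProduct.smul_tmul', Algebra.smul_def, mul_comm]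
  rw [hdecomp, stmt11qR_sum]
  have hqk : q v = ∑ m ∈ (bb.repr v).support, (bb.repr v m * bb.repr v m) • q (bb m)
      + ∑ m ∈ (bb.repr v).support, ∑ m' ∈ (bb.repr v).support.filter (fun m' => m < m'),
          (bb.repr v m * bb.repr v m') • b11 (bb m) (bb m') := by
    conv_lhs => rw [hv]
    rw [stmt11_expand q (fun a b => b11 a b) (fun a => by simp) (fun a b c => by simp)
      (fun a b => hsym a b) hq2 (bb.repr v).support (fun m => bb.repr v m • bb m)]
    congr 1
    · exact Finset.sum_congr rfl fun m _ => hq1 _ _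
    · refine Finset.sum_congr rfl fun m _ => Finset.sum_congr rfl fun m' _ => ?_
      rw [map_smul, map_smul, LinearMap.smul_apply, smul_smul, mul_comm]
  rw [hqk]
  unfold stmt11QF
  rw [tmul_add, tmul_sum, tmul_sum]
  congr 1
  · refine Finset.sum_congr rfl fun m _ => ?_
    rw [TensorProduct.tmul_smul, TensorProduct.smul_tmul', Algebra.smul_def, map_mul]
    congr 1; ring
  · refine Finset.sum_congr rfl fun m _ => ?_
    rw [tmul_sum]
    refine Finset.sum_congr rfl fun m' _ => ?_
    rw [TensorProduct.tmul_smul, TensorProduct.smul_tmul', Algebra.smul_def, map_mul]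
    congr 1; ring

end QR
section QRadd

variable {k g0 g1 R ι : Type*} [CommRing k] [AddCommGroup g0] [Module k g0]
  [AddCommGroup g1] [Module k g1] [CommRing R] [Algebra k R] [LinearOrder ι]
variable (q : g1 → g0) (b11 : g1 →ₗ[k] g1 →ₗ[k] g0) (bb : Module.Basis ι k g1)

lemma stmt11_bR11_sums
    (bR11 : (R ⊗[k] g1) →ₗ[R] (R ⊗[k] g1) →ₗ[R] (R ⊗[k] g0))
    (hbR11 : ∀ (r s : R) (v w : g1), bR11 (r ⊗ₜ v) (s ⊗ₜ w) = (r * s) ⊗ₜ b11 v w)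
    (s t : Finset ι) (c d : ι → R) :
    bR11 (∑ i ∈ s, c i ⊗ₜ bb i) (∑ j ∈ t, d j ⊗ₜ bb j)
      = ∑ i ∈ s, ∑ j ∈ t, (c i * d j) ⊗ₜ b11 (bb i) (bb j) := by
  rw [map_sum]
  have h1 : ∀ j ∈ t, (bR11 (∑ i ∈ s, c i ⊗ₜ[k] bb i)) (d j ⊗ₜ[k] bb j)
      = ∑ i ∈ s, (c i * d j) ⊗ₜ[k] b11 (bb i) (bb j) := by
    intro j _
    rw [map_sum, LinearMap.coe_sum, Finset.sum_apply]
    exact Finset.sum_congr rfl fun i _ => hbR11 _ _ _ _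
  rw [Finset.sum_congr rfl h1, Finset.sum_comm]

lemma stmt11qR_add
    (hdiag : ∀ v : g1, b11 v v = q v + q v)
    (hsym : ∀ v w : g1, b11 v w = b11 w v)
    (bR11 : (R ⊗[k] g1) →ₗ[R] (R ⊗[k] g1) →ₗ[R] (R ⊗[k] g0))
    (hbR11 : ∀ (r s : R) (v w : g1), bR11 (r ⊗ₜ v) (s ⊗ₜ w) = (r * s) ⊗ₜ b11 v w)
    (x y : R ⊗[k] g1) :
    stmt11qR q b11 bb (x + y)
      = stmt11qR q b11 bb x + bR11 x y + stmt11qR q b11 bb y := by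
  classical
  set TB := Algebra.TensorProduct.basis R bb with hTBdef
  set s := (TB.repr x).support ∪ (TB.repr y).support with hsdef
  have hsx : (TB.repr x).support ⊆ s := Finset.subset_union_left
  have hsy : (TB.repr y).support ⊆ s := Finset.subset_union_right
  have hsxy : (TB.repr (x + y)).support ⊆ s := by
    rw [map_add]; exact Finsupp.support_add
  rw [stmt11qR_eq q b11 bb _ hsxy, stmt11qR_eq q b11 bb _ hsx, stmt11qR_eq q b11 bb _ hsy]
  have hxy : ⇑(TB.repr (x + y)) = fun i => (⇑(TB.repr x)) i + (⇑(TB.repr y)) i := by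
    funext i; rw [map_add]; rfl
  rw [hxy, stmt11QF_add q b11 bb hdiag hsym _ (⇑(TB.repr x)) (⇑(TB.repr y))]
  have hb : bR11 x y = ∑ i ∈ s, ∑ j ∈ s, (TB.repr x i * TB.repr y j) ⊗ₜ b11 (bb i) (bb j) := by
    conv_lhs => rw [stmt11_repr_sum_tmul bb x hsx, stmt11_repr_sum_tmul bb y hsy]
    exact stmt11_bR11_sums b11 bb bR11 hbR11 s s _ _
  rw [hb]

end QRadd
/-- Base change of a 2-operation.  Let g be a Lie superalgebra over k with a
2-operation q and k-free odd part, and R a commutative k-algebra.  Then there is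
a unique map q_R on R ⊗ g₁ (independent of any choice of ordered basis) given by
the displayed formula on arbitrary finite sums Σ cᵢ⊗vᵢ, and q_R is a 2-operation
on the base-changed R-Lie superalgebra R ⊗ g.  The base-changed brackets `bR**`
are characterized on pure tensors. -/
theorem stmt11 (k g0 g1 : Type*) [CommRing k]
    [AddCommGroup g0] [Module k g0] [AddCommGroup g1] [Module k g1]
    [Module.Free k g1]
    (b00 : g0 →ₗ[k] g0 →ₗ[k] g0) (b01 : g0 →ₗ[k] g1 →ₗ[k] g1)
    (b10 : g1 →ₗ[k] g0 →ₗ[k] g1) (b11 : g1 →ₗ[k] g1 →ₗ[k] g0)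
    -- Lie superalgebra axioms
    (alt0 : ∀ u : g0, b00 u u = 0)
    (odd3 : ∀ v : g1, b01 (b11 v v) v = 0)
    (antisym00 : ∀ u w : g0, b00 u w = - b00 w u)
    (antisym01 : ∀ (u : g0) (v : g1), b01 u v = - b10 v u)
    (sym11 : ∀ v w : g1, b11 v w = b11 w v)
    (jac000 : ∀ x y z : g0, b00 (b00 x y) z + b00 (b00 y z) x + b00 (b00 z x) y = 0)
    (jac001 : ∀ (x y : g0) (v : g1),
      b01 (b00 x y) v + b10 (b01 y v) x + b10 (b10 v x) y = 0)
    (jac011 : ∀ (x : g0) (v w : g1),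
      b11 (b01 x v) w + b00 (b11 v w) x - b11 (b10 w x) v = 0)
    (jac111 : ∀ u v w : g1, b01 (b11 u v) w + b01 (b11 v w) u + b01 (b11 w u) v = 0)
    -- the 2-operation q on g
    (q : g1 → g0)
    (hq1 : ∀ (c : k) (v : g1), q (c • v) = (c * c) • q v)
    (hq2 : ∀ v w : g1, q (v + w) = q v + b11 v w + q w)
    (hq3even : ∀ (v : g1) (x : g0), b00 (q v) x = b11 v (b10 v x))
    (hq3odd : ∀ (v z : g1), b01 (q v) z = b10 v (b11 v z))
    -- a commutative k-algebra R
    (R : Type*) [CommRing R] [Algebra k R]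
    -- base-changed brackets, characterized on pure tensors
    (bR00 : (R ⊗[k] g0) →ₗ[R] (R ⊗[k] g0) →ₗ[R] (R ⊗[k] g0))
    (bR01 : (R ⊗[k] g0) →ₗ[R] (R ⊗[k] g1) →ₗ[R] (R ⊗[k] g1))
    (bR10 : (R ⊗[k] g1) →ₗ[R] (R ⊗[k] g0) →ₗ[R] (R ⊗[k] g1))
    (bR11 : (R ⊗[k] g1) →ₗ[R] (R ⊗[k] g1) →ₗ[R] (R ⊗[k] g0))
    (hbR00 : ∀ (r s : R) (u w : g0), bR00 (r ⊗ₜ u) (s ⊗ₜ w) = (r * s) ⊗ₜ b00 u w)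
    (hbR01 : ∀ (r s : R) (u : g0) (v : g1), bR01 (r ⊗ₜ u) (s ⊗ₜ v) = (r * s) ⊗ₜ b01 u v)
    (hbR10 : ∀ (r s : R) (v : g1) (u : g0), bR10 (r ⊗ₜ v) (s ⊗ₜ u) = (r * s) ⊗ₜ b10 v u)
    (hbR11 : ∀ (r s : R) (v w : g1), bR11 (r ⊗ₜ v) (s ⊗ₜ w) = (r * s) ⊗ₜ b11 v w) :
    ∃! qR : (R ⊗[k] g1) → (R ⊗[k] g0),
      -- the defining formula, on arbitrary elements Σᵢ cᵢ ⊗ vᵢ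
      (∀ (n : ℕ) (c : Fin n → R) (v : Fin n → g1),
        qR (∑ i, c i ⊗ₜ v i) =
          (∑ i, (c i * c i) ⊗ₜ q (v i)) +
          ∑ i, ∑ j ∈ Finset.univ.filter (fun j => i < j), (c i * c j) ⊗ₜ b11 (v i) (v j)) ∧
      -- q_R is a 2-operation on R ⊗ g
      (∀ (r : R) (x : R ⊗[k] g1), qR (r • x) = (r * r) • qR x) ∧
      (∀ x y : R ⊗[k] g1, qR (x + y) = qR x + bR11 x y + qR y) ∧
      (∀ (x : R ⊗[k] g1) (z : R ⊗[k] g0), bR00 (qR x) z = bR11 x (bR10 x z)) ∧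
      (∀ (x z : R ⊗[k] g1), bR01 (qR x) z = bR10 x (bR11 x z)) := by
  classical
  letI : LinearOrder (Module.Free.ChooseBasisIndex k g1) := linearOrderOfSTO WellOrderingRel
  set bb : Module.Basis (Module.Free.ChooseBasisIndex k g1) k g1 := Module.Free.chooseBasis k g1
    with hbbdef
  -- diagonal values of b11
  have hdiag : ∀ v : g1, b11 v v = q v + q v := by
    intro v
    have h1 : q (v + v) = q v + b11 v v + q v := hq2 v v
    have h2 : q (v + v) = ((2 : k) * (2 : k)) • q v := by
      rw [← two_smul k v, hq1]
    have h3 : ((2 : k) * (2 : k)) • q v = (q v + q v) + (q v + q v) := by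
      rw [mul_smul, two_smul, two_smul]
    rw [h2, h3] at h1
    have h4 : b11 v v = (q v + q v) + (q v + q v) - q v - q v := by
      rw [h1]; abel
    rw [h4]; abel
  -- polarization identities
  have pol_even : ∀ (v w : g1) (u : g0),
      b00 (b11 v w) u = b11 v (b10 w u) + b11 w (b10 v u) := by
    intro v w u
    have h := jac011 u v w
    rw [antisym01, map_neg, LinearMap.neg_apply] at h
    have h2 : b00 (b11 v w) u = b11 (b10 w u) v + b11 (b10 v u) w := by
      rw [← sub_eq_zero]; rw [← h]; abel
    rw [h2, sym11 (b10 w u) v, sym11 (b10 v u) w]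
  have pol_odd : ∀ (v w z : g1),
      b01 (b11 v w) z = b10 v (b11 w z) + b10 w (b11 v z) := by
    intro v w z
    have h := jac111 v w z
    rw [antisym01 (b11 w z) v, antisym01 (b11 z v) w] at h
    have h2 : b01 (b11 v w) z = b10 v (b11 w z) + b10 w (b11 z v) := by
      rw [← sub_eq_zero, ← h]; abel
    rw [h2, sym11 z v]
  -- symmetry of bR11
  have hbRsym : ∀ x y : R ⊗[k] g1, bR11 x y = bR11 y x := by
    intro x y
    induction x using TensorProduct.induction_on with
    | zero => simp
    | tmul r u =>
      induction y using TensorProduct.induction_on with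
      | zero => simp
      | tmul t w => rw [hbR11, hbR11, mul_comm, sym11]
      | add y1 y2 h1 h2 => simp only [map_add, LinearMap.add_apply, h1, h2]
    | add x1 x2 h1 h2 => simp only [map_add, LinearMap.add_apply, h1, h2]
  -- the 2-operation properties of qR
  have hsmul : ∀ (r : R) (x : R ⊗[k] g1),
      stmt11qR q b11 bb (r • x) = (r * r) • stmt11qR q b11 bb x :=
    stmt11qR_smul q b11 bb
  have hadd : ∀ x y : R ⊗[k] g1,
      stmt11qR q b11 bb (x + y) = stmt11qR q b11 bb x + bR11 x y + stmt11qR q b11 bb y :=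
    stmt11qR_add q b11 bb hdiag sym11 bR11 hbR11
  have htmul : ∀ (c : R) (v : g1), stmt11qR q b11 bb (c ⊗ₜ v) = (c * c) ⊗ₜ q v :=
    stmt11qR_tmul q b11 bb hq1 hq2 sym11
  -- the defining formula on arbitrary finite sums
  have hform : ∀ (n : ℕ) (c : Fin n → R) (v : Fin n → g1),
      stmt11qR q b11 bb (∑ i, c i ⊗ₜ v i) =
        (∑ i, (c i * c i) ⊗ₜ q (v i)) +
        ∑ i, ∑ j ∈ Finset.univ.filter (fun j => i < j), (c i * c j) ⊗ₜ b11 (v i) (v j) := by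
    intro n c v
    rw [stmt11_expand (stmt11qR q b11 bb) (fun a b => bR11 a b)
      (fun a => by simp) (fun a b c' => by simp) hbRsym hadd
      Finset.univ (fun i => c i ⊗ₜ v i)]
    congr 1
    · exact Finset.sum_congr rfl fun i _ => htmul _ _
    · exact Finset.sum_congr rfl fun i _ => Finset.sum_congr rfl fun j _ => hbR11 _ _ _ _
  -- adjoint identity, even part
  have h4 : ∀ (x : R ⊗[k] g1) (z : R ⊗[k] g0),
      bR00 (stmt11qR q b11 bb x) z = bR11 x (bR10 x z) := by
    intro x z
    set TB := Algebra.TensorProduct.basis R bb with hTBdef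
    set s : Finset (Module.Free.ChooseBasisIndex k g1) := (TB.repr x).support with hsdef
    have hx : x = ∑ i ∈ s, TB.repr x i ⊗ₜ bb i := stmt11_repr_sum_tmul bb x subset_rfl
    have hqx : stmt11qR q b11 bb x = stmt11QF q b11 bb s (⇑(TB.repr x)) :=
      stmt11qR_eq q b11 bb x subset_rfl
    induction z using TensorProduct.induction_on with
    | zero => simp
    | add z1 z2 hz1 hz2 => simp only [map_add, hz1, hz2]
    | tmul t u =>
      rw [hqx]
      conv_rhs => rw [hx]
      simp only [stmt11QF, map_add, map_sum, LinearMap.add_apply, LinearMap.sum_apply, hbR00,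
        hbR10, hbR11]
      conv_rhs => rw [Finset.sum_comm]
      rw [stmt11_pairing s
        (fun i j => ((TB.repr x) i * ((TB.repr x) j * t)) ⊗ₜ[k] b11 (bb i) (b10 (bb j) u))
        (fun i => ((TB.repr x) i * (TB.repr x) i * t) ⊗ₜ[k] b00 (q (bb i)) u)
        (fun i j => ((TB.repr x) i * (TB.repr x) j * t) ⊗ₜ[k] b00 (b11 (bb i) (bb j)) u)
        (fun i _ => by beta_reduce; rw [hq3even, ← mul_assoc])
        (fun i _ j _ _ => by
          beta_reduce
          rw [show (TB.repr x) i * ((TB.repr x) j * t)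
              = (TB.repr x) i * (TB.repr x) j * t by ring,
            show (TB.repr x) j * ((TB.repr x) i * t)
              = (TB.repr x) i * (TB.repr x) j * t by ring,
            pol_even, tmul_add])]
  -- adjoint identity, odd part
  have h5 : ∀ (x z : R ⊗[k] g1),
      bR01 (stmt11qR q b11 bb x) z = bR10 x (bR11 x z) := by
    intro x z
    set TB := Algebra.TensorProduct.basis R bb with hTBdef
    set s : Finset (Module.Free.ChooseBasisIndex k g1) := (TB.repr x).support with hsdef
    have hx : x = ∑ i ∈ s, TB.repr x i ⊗ₜ bb i := stmt11_repr_sum_tmul bb x subset_rfl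
    have hqx : stmt11qR q b11 bb x = stmt11QF q b11 bb s (⇑(TB.repr x)) :=
      stmt11qR_eq q b11 bb x subset_rfl
    induction z using TensorProduct.induction_on with
    | zero => simp
    | add z1 z2 hz1 hz2 => simp only [map_add, hz1, hz2]
    | tmul t w =>
      rw [hqx]
      conv_rhs => rw [hx]
      simp only [stmt11QF, map_add, map_sum, LinearMap.add_apply, LinearMap.sum_apply, hbR01,
        hbR10, hbR11]
      conv_rhs => rw [Finset.sum_comm]
      rw [stmt11_pairing s
        (fun i j => ((TB.repr x) i * ((TB.repr x) j * t)) ⊗ₜ[k] b10 (bb i) (b11 (bb j) w))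
        (fun i => ((TB.repr x) i * (TB.repr x) i * t) ⊗ₜ[k] b01 (q (bb i)) w)
        (fun i j => ((TB.repr x) i * (TB.repr x) j * t) ⊗ₜ[k] b01 (b11 (bb i) (bb j)) w)
        (fun i _ => by beta_reduce; rw [hq3odd, ← mul_assoc])
        (fun i _ j _ _ => by
          beta_reduce
          rw [show (TB.repr x) i * ((TB.repr x) j * t)
              = (TB.repr x) i * (TB.repr x) j * t by ring,
            show (TB.repr x) j * ((TB.repr x) i * t)
              = (TB.repr x) i * (TB.repr x) j * t by ring,
            pol_odd, tmul_add])]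
  -- uniqueness
  refine ⟨stmt11qR q b11 bb, ⟨hform, hsmul, hadd, h4, h5⟩, ?_⟩
  rintro qR' ⟨hform', -, -, -, -⟩
  funext x
  set TB := Algebra.TensorProduct.basis R bb with hTBdef
  set s : Finset (Module.Free.ChooseBasisIndex k g1) := (TB.repr x).support with hsdef
  have e := s.orderIsoOfFin (rfl : s.card = s.card)
  have hx : x = ∑ i : Fin s.card, TB.repr x (e i) ⊗ₜ bb (e i) := by
    conv_lhs => rw [stmt11_repr_sum_tmul bb x (subset_rfl : (TB.repr x).support ⊆ s)]
    rw [← Finset.sum_coe_sort s (fun i => TB.repr x i ⊗ₜ[k] bb i)]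
    exact (Fintype.sum_equiv e.toEquiv _ _ (fun i => rfl)).symm
  rw [hx, hform' s.card (fun i => TB.repr x (e i)) (fun i => bb (e i)),
    ← hform s.card (fun i => TB.repr x (e i)) (fun i => bb (e i))]
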